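/- Let M be a multiset of natural numbers of size n ≥ 2, let a, b ∈ M (counted with multiplicity), and let M′ be obtained from M by removing a and b and inserting natural numbers a′ and b′ with min(a′, b′) < min(a, b). Then the list of elements of M′ sorted in increasing order is strictly smaller, in the lexicographic order on lists of length n, than the list of elements of M sorted in increasing order. -/

import Mathlib

/-- Key lemma: if two sorted lists of equal length agree on counts of all
elements below `v`, and the first has strictly more copies of `v`, then the
first is lexicographically smaller. -/
theorem sorted_lex_of_counts (v : ℕ) :
    ∀ (L' L : List ℕ), L'.Pairwise (· ≤ ·) → L.Pairwise (· ≤ ·) →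
    L'.length = L.length → (∀ x, x < v → L'.count x = L.count x) →
    L.count v < L'.count v → List.Lex (· < ·) L' L := by
  intro L'
  induction L' with
  | nil =>
    intro L _ _ hlen _ hv
    cases L with
    | nil => simp at hv
    | cons y ys => simp at hlen
  | cons x xs ih =>
    intro L hs' hs hlen hlt hv
    cases L with
    | nil => simp at hlen
    | cons y ys =>
      rcases lt_trichotomy x y with h | h | h
      · exact List.Lex.rel h
      · subst h
        refine List.Lex.cons (ih ys hs'.of_cons hs.of_cons (by simpa using hlen) ?_ ?_)
        · intro z hz
          have := hlt z hz
          simp [List.count_cons] at this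
          omega
        · simp [List.count_cons] at hv
          omega
      · -- x > y : contradiction
        exfalso
        rcases lt_or_ge y v with hyv | hyv
        · -- y < v, so count y L' = count y L ≥ 1, so y ∈ x::xs, but all ≥ x > y
          have hcy := hlt y hyv
          have hy1 : 0 < (y :: ys).count y := by simp
          have hy2 : 0 < (x :: xs).count y := by omega
          have hymem : y ∈ x :: xs := List.count_pos_iff.mp hy2
          rcases List.mem_cons.mp hymem with rfl | hmem
          · exact lt_irrefl _ h
          · have := (List.pairwise_cons.mp hs').1 y hmem
            omega
        · -- y ≥ v, but v ∈ L', so x ≤ v ≤ y, contradiction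
          have hv1 : 0 < (x :: xs).count v := by omega
          have hvmem : v ∈ x :: xs := List.count_pos_iff.mp hv1
          rcases List.mem_cons.mp hvmem with rfl | hmem
          · omega
          · have := (List.pairwise_cons.mp hs').1 v hmem
            omega

/-- If a multiset `M` of naturals of size `n ≥ 2` contains `a` and `b`
(with multiplicity), and `M'` is obtained from `M` by removing `a` and `b` and
inserting `a'` and `b'` with `min a' b' < min a b`, then the increasingly sorted
list of `M'` is lexicographically strictly smaller than that of `M`. -/
theorem sorted_lex_decrease (n : ℕ) (hn : 2 ≤ n)
    (M M' : Multiset ℕ) (hcard : M.card = n)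
    (a b a' b' : ℕ) (R : Multiset ℕ)
    (hM : M = a ::ₘ b ::ₘ R) (hM' : M' = a' ::ₘ b' ::ₘ R)
    (hdec : min a' b' < min a b) :
    List.Lex (· < ·) (M'.sort (· ≤ ·)) (M.sort (· ≤ ·)) := by
  set v := min a' b' with hvdef
  have hcnt : ∀ (S : Multiset ℕ) (x : ℕ), (S.sort (· ≤ ·)).count x = S.count x := by
    intro S x
    rw [← Multiset.coe_count, Multiset.sort_eq]
  apply sorted_lex_of_counts v
  · exact Multiset.pairwise_sort _ _
  · exact Multiset.pairwise_sort _ _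
  · simp [Multiset.length_sort, hM, hM']
  · intro x hx
    rw [hcnt, hcnt, hM, hM']
    have h1 : x ≠ a := by omega
    have h2 : x ≠ b := by omega
    have h3 : x ≠ a' := by omega
    have h4 : x ≠ b' := by omega
    simp [Multiset.count_cons, h1, h2, h3, h4]
  · rw [hcnt, hcnt, hM, hM']
    have h1 : v ≠ a := by omega
    have h2 : v ≠ b := by omega
    have h3 : v = a' ∨ v = b' := by omega
    rcases h3 with h3 | h3 <;> simp [Multiset.count_cons, h1, h2, ← h3] <;> omega
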